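/- Let u, ũ ∈ ℝ² and let κ_u, κ_ũ be the Kronecker flows on the 2-torus 𝕋 = ℝ²/ℤ² given by κ_u(t,z) = z + tu (mod ℤ²). If f : 𝕋 → 𝕋 is continuous and maps some κ_u-orbit into a κ_ũ-orbit, then L_f u and ũ are linearly dependent, where L_f ∈ ℤ^{2×2} is the matrix induced by f on the fundamental group (i.e., the unique integer matrix with sup_{x∈ℝ²} ‖F(x) − L_f x‖ < ∞ for a lift F of f). -/

import Mathlib

/-- Auxiliary: a continuous real function whose range lies in a countable set is constant. -/
lemma const_of_countable_range (h : ℝ → ℝ) (hc : Continuous h) (S : Set ℝ)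
    (hS : S.Countable) (hr : ∀ t, h t ∈ S) (t : ℝ) : h t = h 0 := by
  by_contra hne
  have hsub : Set.uIcc (h 0) (h t) ⊆ h '' (Set.uIcc 0 t) :=
    intermediate_value_uIcc hc.continuousOn
  have hsubS : Set.uIcc (h 0) (h t) ⊆ S := fun x hx => by
    obtain ⟨y, _, hy⟩ := hsub hx; exact hy ▸ hr y
  have hcnt : (Set.uIcc (h 0) (h t)).Countable := hS.mono hsubS
  have h0 : MeasureTheory.volume (Set.uIcc (h 0) (h t)) = 0 :=
    hcnt.measure_zero _
  rw [Set.uIcc, Real.volume_Icc] at h0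
  have : max (h 0) (h t) - min (h 0) (h t) ≤ 0 := by
    by_contra hpos
    push_neg at hpos
    exact (ENNReal.ofReal_pos.mpr hpos).ne' h0
  have := sub_nonneg.mpr (min_le_max (a := h 0) (b := h t))
  have hmm : max (h 0) (h t) ≤ min (h 0) (h t) := by linarith
  have h1 : h t ≤ h 0 := le_trans (le_trans (le_max_right _ _) hmm) (min_le_left _ _)
  have h2 : h 0 ≤ h t := le_trans (le_trans (le_max_left _ _) hmm) (min_le_right _ _)
  exact hne (le_antisymm h1 h2)

/-- (Rigidity of Kronecker flows on the 2-torus, stated via lifts.)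
Let `F : ℝ² → ℝ²` be a continuous lift of a continuous map `f` of the torus
`𝕋 = ℝ²/ℤ²` (i.e. `F (x + k) - F x ∈ ℤ²` for every integer vector `k`), and let
`L ∈ ℤ^{2×2}` be the induced matrix, i.e. `F - L` is bounded. If `f` maps some
`κ_u`-orbit into a `κ_ũ`-orbit, i.e. there are `z, z̃ ∈ ℝ²` such that for every
`t ∈ ℝ` there are `s ∈ ℝ` and `k ∈ ℤ²` with `F (z + t • u) = z̃ + s • ũ + k`, then
`L u` and `ũ` are linearly dependent. -/
theorem stmt10 (u v : Fin 2 → ℝ)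
    (F : (Fin 2 → ℝ) → (Fin 2 → ℝ)) (hFcont : Continuous F)
    (hFlift : ∀ (x : Fin 2 → ℝ) (k : Fin 2 → ℤ),
      ∃ k' : Fin 2 → ℤ, F (x + fun i => (k i : ℝ)) = F x + fun i => (k' i : ℝ))
    (L : Matrix (Fin 2) (Fin 2) ℤ)
    (hL : ∃ M : ℝ, ∀ x : Fin 2 → ℝ, ‖F x - (L.map (Int.cast : ℤ → ℝ)).mulVec x‖ ≤ M)
    (z w : Fin 2 → ℝ)
    (horb : ∀ t : ℝ, ∃ (s : ℝ) (k : Fin 2 → ℤ),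
      F (z + t • u) = w + s • v + fun i => (k i : ℝ)) :
    ∃ a b : ℝ, ¬(a = 0 ∧ b = 0) ∧
      a • (L.map (Int.cast : ℤ → ℝ)).mulVec u + b • v = 0 := by
  classical
  by_cases hv : v = 0
  · exact ⟨0, 1, fun h => one_ne_zero h.2, by simp [hv]⟩
  set Lr := L.map (Int.cast : ℤ → ℝ) with hLrdef
  -- the orbit curve and its projection killing v
  set g : ℝ → (Fin 2 → ℝ) := fun t => F (z + t • u) with hgdef
  have hgcont : Continuous g := by
    apply hFcont.comp
    exact continuous_const.add (continuous_id.smul continuous_const)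
  set h : ℝ → ℝ := fun t => v 1 * g t 0 - v 0 * g t 1 with hhdef
  have hhcont : Continuous h := by
    apply Continuous.sub
    · exact continuous_const.mul ((continuous_apply 0).comp hgcont)
    · exact continuous_const.mul ((continuous_apply 1).comp hgcont)
  -- h takes values in a countable set
  set S : Set ℝ := Set.range (fun k : Fin 2 → ℤ =>
    v 1 * (w 0 + (k 0 : ℝ)) - v 0 * (w 1 + (k 1 : ℝ))) with hSdef
  have hScnt : S.Countable := Set.countable_range _
  have hmem : ∀ t, h t ∈ S := by
    intro t
    obtain ⟨s, k, hk⟩ := horb t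
    refine ⟨k, ?_⟩
    have : g t = w + s • v + fun i => (k i : ℝ) := hk
    simp only [hhdef, this, Pi.add_apply, Pi.smul_apply, smul_eq_mul]
    ring
  have hconst : ∀ t, h t = h 0 := const_of_countable_range h hhcont S hScnt hmem
  -- use the bounded distance to L to conclude π(Lu) = 0
  obtain ⟨M, hM⟩ := hL
  set c : ℝ := v 1 * (Lr.mulVec u) 0 - v 0 * (Lr.mulVec u) 1 with hcdef
  set e : ℝ → (Fin 2 → ℝ) := fun t => g t - Lr.mulVec (z + t • u) with hedef
  have he : ∀ t i, |e t i| ≤ M := by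
    intro t i
    calc |e t i| ≤ ‖e t‖ := by
          rw [← Real.norm_eq_abs]; exact norm_le_pi_norm (e t) i
      _ ≤ M := hM (z + t • u)
  have hgexp : ∀ t i, g t i = (Lr.mulVec z) i + t * (Lr.mulVec u) i + e t i := by
    intro t i
    have : Lr.mulVec (z + t • u) = Lr.mulVec z + t • Lr.mulVec u := by
      rw [Matrix.mulVec_add, Matrix.mulVec_smul]
    simp only [hedef, this, Pi.sub_apply, Pi.add_apply, Pi.smul_apply, smul_eq_mul]
    ring
  have hbound : ∀ t : ℝ, |t * c| ≤ (|v 1| + |v 0|) * (2 * M) := by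
    intro t
    have h1 := hconst t
    have e00 := he 0 0; have e01 := he 0 1; have et0 := he t 0; have et1 := he t 1
    have habs0 : |e 0 0| ≤ M := e00
    have expand : t * c = (v 1 * e 0 0 - v 0 * e 0 1) - (v 1 * e t 0 - v 0 * e t 1) := by
      have ht0 := hgexp t 0; have ht1 := hgexp t 1
      have h00 := hgexp 0 0; have h01 := hgexp 0 1
      simp only [hhdef] at h1
      rw [ht0, ht1, h00, h01] at h1
      simp only [hcdef]
      linear_combination h1
    rw [expand]
    have b1 : |v 1 * e 0 0 - v 0 * e 0 1| ≤ |v 1| * M + |v 0| * M := by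
      calc |v 1 * e 0 0 - v 0 * e 0 1| ≤ |v 1 * e 0 0| + |v 0 * e 0 1| := abs_sub _ _
        _ = |v 1| * |e 0 0| + |v 0| * |e 0 1| := by rw [abs_mul, abs_mul]
        _ ≤ |v 1| * M + |v 0| * M := add_le_add
            (mul_le_mul_of_nonneg_left (he 0 0) (abs_nonneg _))
            (mul_le_mul_of_nonneg_left (he 0 1) (abs_nonneg _))
    have b2 : |v 1 * e t 0 - v 0 * e t 1| ≤ |v 1| * M + |v 0| * M := by
      calc |v 1 * e t 0 - v 0 * e t 1| ≤ |v 1 * e t 0| + |v 0 * e t 1| := abs_sub _ _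
        _ = |v 1| * |e t 0| + |v 0| * |e t 1| := by rw [abs_mul, abs_mul]
        _ ≤ |v 1| * M + |v 0| * M := add_le_add
            (mul_le_mul_of_nonneg_left (he t 0) (abs_nonneg _))
            (mul_le_mul_of_nonneg_left (he t 1) (abs_nonneg _))
    calc |(v 1 * e 0 0 - v 0 * e 0 1) - (v 1 * e t 0 - v 0 * e t 1)|
        ≤ |v 1 * e 0 0 - v 0 * e 0 1| + |v 1 * e t 0 - v 0 * e t 1| := abs_sub _ _
      _ ≤ (|v 1| * M + |v 0| * M) + (|v 1| * M + |v 0| * M) := add_le_add b1 b2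
      _ = (|v 1| + |v 0|) * (2 * M) := by ring
  have hc0 : c = 0 := by
    by_contra hcne
    set C : ℝ := (|v 1| + |v 0|) * (2 * M) with hCdef
    have hC0 : 0 ≤ C := le_trans (abs_nonneg ((0:ℝ) * c)) (hbound 0)
    have := hbound ((C + 1) / |c|)
    rw [abs_mul, abs_div, abs_abs, div_mul_cancel₀ _ (abs_ne_zero.mpr hcne)] at this
    have : |C + 1| ≤ C := this
    rw [abs_of_nonneg (by linarith)] at this
    linarith
  -- conclude linear dependence
  have hvi : v 0 ≠ 0 ∨ v 1 ≠ 0 := by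
    by_contra hall
    push_neg at hall
    apply hv
    funext j
    fin_cases j
    exacts [hall.1, hall.2]
  simp only [hcdef] at hc0
  rcases hvi with hi | hi
  · refine ⟨v 0, -(Lr.mulVec u) 0, fun hab => hi hab.1, ?_⟩
    funext j
    fin_cases j <;>
      simp only [Pi.add_apply, Pi.smul_apply, smul_eq_mul, Pi.zero_apply,
        Fin.mk_zero, Fin.mk_one, Fin.isValue] <;> linarith [hc0, sq_nonneg (v 0)] <;> nlinarith [hc0]
  · refine ⟨v 1, -(Lr.mulVec u) 1, fun hab => hi hab.1, ?_⟩
    funext j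
    fin_cases j <;>
      simp only [Pi.add_apply, Pi.smul_apply, smul_eq_mul, Pi.zero_apply,
        Fin.mk_zero, Fin.mk_one, Fin.isValue] <;> linarith [hc0, sq_nonneg (v 1)] <;> nlinarith [hc0]
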